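/- Let M be a matroid on a finite linearly ordered ground set E. For every subset S of E there exist a unique basis B of M, a unique subset X of the externally active elements EA(B), and a unique subset Y of the internally active elements IA(B), such that S = (B \ Y) ∪ X. Equivalently, the intervals [B \ IA(B), B ∪ EA(B)], as B ranges over the bases of M, partition the power set of E. -/

import Mathlib

open Set

variable {α : Type*}

/-- A circuit of a matroid: a minimal dependent set. -/
def Matroid.Cct (M : Matroid α) (C : Set α) : Prop :=
  M.Dep C ∧ ∀ D ⊂ C, ¬ M.Dep D

/-- The externally active elements with respect to `S`: elements `e ∈ E \ S` that are the
maximum of some circuit contained in `S ∪ {e}`. -/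
def Matroid.exA [LinearOrder α] (M : Matroid α) (S : Set α) : Set α :=
  {e | e ∈ M.E \ S ∧ ∃ C, M.Cct C ∧ C ⊆ insert e S ∧ ∀ f ∈ C, f ≤ e}

/-- The externally passive elements with respect to `S`. -/
def Matroid.exP [LinearOrder α] (M : Matroid α) (S : Set α) : Set α :=
  (M.E \ S) \ M.exA S

/-- The internally active elements with respect to `S`: elements of `S` that are externally
active with respect to `E \ S` in the dual matroid. -/
def Matroid.inA [LinearOrder α] (M : Matroid α) (S : Set α) : Set α :=
  {i | i ∈ S ∧ i ∈ M✶.exA (M.E \ S)}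

/-- The internally passive elements with respect to `S`. -/
def Matroid.inP [LinearOrder α] (M : Matroid α) (S : Set α) : Set α :=
  S \ M.inA S

/-- `I` is internally related to the basis `B` if `I = B \ Y` for some `Y ⊆ IA(B)`. -/
def Matroid.IntRelated [LinearOrder α] (M : Matroid α) (I B : Set α) : Prop :=
  M.IsBase B ∧ ∃ Y ⊆ M.inA B, I = B \ Y

/-- The external/internal order on independent sets. -/
def Matroid.extIntLE [LinearOrder α] (M : Matroid α) (I J : Set α) : Prop :=
  ((∃ B, M.IntRelated I B ∧ M.IntRelated J B) ∧ I ⊆ J) ∨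
  ((¬ ∃ B, M.IntRelated I B ∧ M.IntRelated J B) ∧
    (I \ M.inA I) ∪ M.exA I ⊆ (J \ M.inA J) ∪ M.exA J)

namespace CrapoAux

open Matroid

/-- Any dependent set in a finite matroid contains a circuit. -/
lemma dep_exists_cct {M : Matroid α} [M.Finite] {D : Set α} (hD : M.Dep D) :
    ∃ C, M.Cct C ∧ C ⊆ D := by
  have hfin : {X | X ⊆ D ∧ M.Dep X}.Finite :=
    ((M.ground_finite.subset hD.subset_ground).finite_subsets).subset (fun X hX => hX.1)
  obtain ⟨C, hC, hmin⟩ := Set.exists_min_image _ Set.ncard hfin ⟨D, Set.Subset.rfl, hD⟩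
  refine ⟨C, ⟨hC.2, fun D' hD' hdep => ?_⟩, hC.1⟩
  have hlt : D'.ncard < C.ncard :=
    Set.ncard_lt_ncard hD' (M.ground_finite.subset hC.2.subset_ground)
  exact absurd (hmin D' ⟨hD'.subset.trans hC.1, hdep⟩) (by omega)

lemma cct_diff_indep {M : Matroid α} {C : Set α} (hC : M.Cct C) {e : α} (he : e ∈ C) :
    M.Indep (C \ {e}) := by
  have h := hC.2 (C \ {e}) (Set.sdiff_singleton_ssubset.2 he)
  rwa [Matroid.not_dep_iff (Set.diff_subset.trans hC.1.subset_ground)] at h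

lemma mem_of_cct_insert {M : Matroid α} {C T : Set α} {a : α} (hC : M.Cct C)
    (hCs : C ⊆ insert a T) (hT : M.Indep T) : a ∈ C := by
  by_contra h
  exact hC.1.not_indep (hT.subset (fun x hx =>
    (hCs hx).resolve_left (fun h' => h (h' ▸ hx))))

/-- A circuit and a cocircuit cannot meet in exactly one element. -/
lemma cct_cocct {M : Matroid α} {C D : Set α} {e : α} (hC : M.Cct C) (hD : M✶.Cct D)
    (heC : e ∈ C) (heD : e ∈ D) (hsub : C ∩ D ⊆ {e}) : False := by
  have hDE : D ⊆ M.E := hD.1.subset_ground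
  obtain ⟨Bs, hBs, hDB⟩ := Matroid.Indep.exists_isBase_superset (cct_diff_indep hD heD)
  have hB0 : M.IsBase (M.E \ Bs) := hBs.compl_isBase_of_dual
  obtain ⟨B₁, hB₁, hCB₁, hB₁sub⟩ := Matroid.Indep.exists_isBase_subset_union_isBase (cct_diff_indep hC heC) hB0
  have heB₁ : e ∉ B₁ := by
    intro h
    refine hC.1.not_indep (hB₁.indep.subset (fun x hx => ?_))
    rcases eq_or_ne x e with rfl | hne
    · exact h
    · exact hCB₁ ⟨hx, hne⟩
  have hB₁D : D ⊆ M.E \ B₁ := by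
    intro x hxD
    refine ⟨hDE hxD, fun hxB₁ => ?_⟩
    rcases hB₁sub hxB₁ with hx | hx
    · exact hx.2 (hsub ⟨hx.1, hxD⟩)
    · rcases eq_or_ne x e with rfl | hne
      · exact heB₁ hxB₁
      · exact hx.2 (hDB ⟨hxD, hne⟩)
  exact hD.1.not_indep ((hB₁.compl_isBase_dual).indep.subset hB₁D)

/-- Existence of fundamental circuits. -/
lemma fund_cct {M : Matroid α} [M.Finite] {B : Set α} {a : α} (hB : M.IsBase B)
    (haE : a ∈ M.E) (haB : a ∉ B) : ∃ C, M.Cct C ∧ C ⊆ insert a B ∧ a ∈ C := by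
  obtain ⟨C, hC, hCs⟩ := dep_exists_cct (hB.insert_dep ⟨haE, haB⟩)
  exact ⟨C, hC, hCs, mem_of_cct_insert hC hCs hB.indep⟩

/-- Basis exchange along a circuit element. -/
lemma exchange_base {M : Matroid α} {B C : Set α} {e f : α} (hB : M.IsBase B)
    (heB : e ∉ B) (hC : M.Cct C) (hCs : C ⊆ insert e B) (hf : f ∈ C) (hfe : f ≠ e) :
    M.IsBase (insert e (B \ {f})) := by
  have heC : e ∈ C := mem_of_cct_insert hC hCs hB.indep
  obtain ⟨B₁, hB₁, hCB₁, hB₁sub⟩ := Matroid.Indep.exists_isBase_subset_union_isBase (cct_diff_indep hC hf) hB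
  have hB₁sub' : B₁ ⊆ insert e B :=
    hB₁sub.trans (union_subset (Set.diff_subset.trans hCs) (subset_insert _ _))
  have heB₁ : e ∈ B₁ := hCB₁ ⟨heC, Ne.symm hfe⟩
  have h1 : B₁ \ B = {e} := by
    apply subset_antisymm
    · rintro x ⟨hx1, hx2⟩
      exact (hB₁sub' hx1).resolve_right hx2
    · rintro x rfl
      exact ⟨heB₁, heB⟩
  have h2 : (B \ B₁).encard = 1 := by
    rw [← hB₁.encard_diff_comm hB, h1, Set.encard_singleton]
  obtain ⟨g, hg⟩ := Set.encard_eq_one.1 h2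
  have hgB : g ∈ B \ B₁ := by rw [hg]; exact rfl
  have hgC : g ∈ C := by
    by_contra h
    refine hC.1.not_indep (hB₁.indep.subset (fun x hx => ?_))
    rcases hCs hx with rfl | hxB
    · exact heB₁
    · by_contra hxB₁
      have hxm : x ∈ B \ B₁ := ⟨hxB, hxB₁⟩
      rw [hg] at hxm
      exact h (hxm ▸ hx)
  have hgf : g = f := by
    by_contra h
    exact hgB.2 (hCB₁ ⟨hgC, h⟩)
  subst hgf
  have heq : B₁ = insert e (B \ {g}) := by
    ext x
    constructor
    · intro hx
      rcases hB₁sub' hx with rfl | hxB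
      · exact Or.inl rfl
      · refine Or.inr ⟨hxB, fun hxg => ?_⟩
        rw [Set.mem_singleton_iff] at hxg
        subst hxg
        exact hgB.2 hx
    · rintro (rfl | ⟨hxB, hxg⟩)
      · exact heB₁
      · by_contra hxB₁
        have hxm : x ∈ B \ B₁ := ⟨hxB, hxB₁⟩
        rw [hg] at hxm
        exact hxg hxm
  exact heq ▸ hB₁

noncomputable def wt (G : Finset α) (w : α → ℤ) (B : Set α) : ℤ :=
  ∑ x ∈ G, B.indicator w x

open Classical in
lemma wt_exchange {G : Finset α} (w : α → ℤ) {B : Set α} {e f : α}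
    (heG : e ∈ G) (hfG : f ∈ G) (heB : e ∉ B) (hfB : f ∈ B) (hef : e ≠ f) :
    wt G w (insert e (B \ {f})) = wt G w B + w e - w f := by
  have key : wt G w (insert e (B \ {f})) - wt G w B = w e - w f := by
    unfold wt
    rw [← Finset.sum_sub_distrib]
    have congr1 : ∀ x ∈ G,
        (insert e (B \ {f})).indicator w x - B.indicator w x
        = (if x = e then w x else 0) + (if x = f then -(w x) else 0) := by
      intro x _
      by_cases hxe : x = e
      · subst hxe
        rw [Set.indicator_of_mem (Set.mem_insert _ _), Set.indicator_of_notMem heB,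
          if_pos rfl, if_neg hef]
        ring
      · by_cases hxf : x = f
        · have hx' : x ∉ insert e (B \ {f}) := by
            intro h
            rcases Set.mem_insert_iff.1 h with h | h
            · exact hxe h
            · exact h.2 (Set.mem_singleton_iff.2 hxf)
          rw [Set.indicator_of_notMem hx', Set.indicator_of_mem (hxf ▸ hfB),
            if_neg hxe, if_pos hxf, hxf]
          ring
        · have hiff : (x ∈ insert e (B \ {f})) ↔ x ∈ B := by
            constructor
            · intro h
              rcases Set.mem_insert_iff.1 h with h | h
              · exact absurd h hxe
              · exact h.1
            · intro h
              exact Set.mem_insert_iff.2 (Or.inr ⟨h, hxf⟩)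
          by_cases hxB : x ∈ B
          · rw [Set.indicator_of_mem (hiff.2 hxB) w, Set.indicator_of_mem hxB w,
              if_neg hxe, if_neg hxf]
            ring
          · rw [Set.indicator_of_notMem (fun h => hxB (hiff.1 h)) w,
              Set.indicator_of_notMem hxB w, if_neg hxe, if_neg hxf]
            ring
    refine Eq.trans (Finset.sum_congr rfl congr1) ?_
    rw [Finset.sum_add_distrib, Finset.sum_ite_eq' G e w,
      Finset.sum_ite_eq' G f (fun x => -(w x)), if_pos heG, if_pos hfG]
    ring
  linarith [key]

/-- Complement formula for dual weights. -/
lemma wt_compl {G : Finset α} (w : α → ℤ) {B E : Set α} (hG : ∀ x, x ∈ G ↔ x ∈ E)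
    (hB : B ⊆ E) : wt G (fun x => -(w x)) (E \ B) = wt G w B - ∑ x ∈ G, w x := by
  have key : wt G (fun x => -(w x)) (E \ B) + ∑ x ∈ G, w x = wt G w B := by
    unfold wt
    rw [← Finset.sum_add_distrib]
    refine Finset.sum_congr rfl (fun x hx => ?_)
    by_cases hxB : x ∈ B
    · rw [Set.indicator_of_notMem (fun h => h.2 hxB), Set.indicator_of_mem hxB]
      ring
    · have hmem : x ∈ E \ B := ⟨(hG x).1 hx, hxB⟩
      rw [Set.indicator_of_mem hmem, Set.indicator_of_notMem hxB]
      ring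
  linarith [key]

/-- A minimum-weight basis has all of `S \ B` externally active, for suitable weights. -/
lemma min_wt_exA [LinearOrder α] {M : Matroid α} [M.Finite] {S B : Set α} {G : Finset α}
    {w : α → ℤ}
    (hG : ∀ x, x ∈ G ↔ x ∈ M.E) (hB : M.IsBase B)
    (hmin : ∀ B', M.IsBase B' → wt G w B ≤ wt G w B')
    (hw1 : ∀ e f, e ∈ M.E → f ∈ M.E → e ∈ S → f ∉ S → w e < w f)
    (hw2 : ∀ e f, e ∈ M.E → f ∈ M.E → e ∈ S → f ∈ S → e < f → w e < w f)
    {e : α} (heS : e ∈ S) (heE : e ∈ M.E) (heB : e ∉ B) :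
    e ∈ M.exA B := by
  obtain ⟨C, hC, hCs, heC⟩ := fund_cct hB heE heB
  refine ⟨⟨heE, heB⟩, C, hC, hCs, fun f hf => ?_⟩
  by_contra hfe
  push_neg at hfe
  have hfne : f ≠ e := ne_of_gt hfe
  have hfB : f ∈ B := (hCs hf).resolve_left hfne
  have hfE : f ∈ M.E := hB.subset_ground hfB
  have hB' : M.IsBase (insert e (B \ {f})) := exchange_base hB heB hC hCs hf hfne
  have hlt : w e < w f := by
    by_cases hfS : f ∈ S
    · exact hw2 e f heE hfE heS hfS hfe
    · exact hw1 e f heE hfE heS hfS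
  have hm := hmin _ hB'
  rw [wt_exchange w ((hG e).2 heE) ((hG f).2 hfE) heB hfB hfne.symm] at hm
  linarith

/-- Existence of a basis whose interval contains `S`. -/
lemma exists_good_base [LinearOrder α] (M : Matroid α) [M.Finite] (S : Set α)
    (hS : S ⊆ M.E) :
    ∃ B, M.IsBase B ∧ (∀ x, x ∈ S → x ∉ B → x ∈ M.exA B) ∧
      (∀ x, x ∈ B → x ∉ S → x ∈ M.inA B) := by
  classical
  set G : Finset α := M.ground_finite.toFinset with hGdef
  have hG : ∀ x, x ∈ G ↔ x ∈ M.E := fun x => M.ground_finite.mem_toFinset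
  set n : ℤ := (G.card : ℤ) with hndef
  set w : α → ℤ := fun x => if x ∈ S then ((G.filter (fun y => y ∈ S ∧ y ≤ x)).card : ℤ)
    else (2 * n + 1) - ((G.filter (fun y => y ∉ S ∧ y ≤ x)).card : ℤ) with hwdef
  have wpos : ∀ x, x ∈ S → w x = ((G.filter (fun y => y ∈ S ∧ y ≤ x)).card : ℤ) :=
    fun x hx => if_pos hx
  have wneg : ∀ x, x ∉ S →
      w x = (2 * n + 1) - ((G.filter (fun y => y ∉ S ∧ y ≤ x)).card : ℤ) :=
    fun x hx => if_neg hx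
  have hw1 : ∀ e f, e ∈ M.E → f ∈ M.E → e ∈ S → f ∉ S → w e < w f := by
    intro e f heE hfE heS hfS
    rw [wpos e heS, wneg f hfS]
    have h1 : ((G.filter (fun y => y ∈ S ∧ y ≤ e)).card : ℤ) ≤ n := by
      rw [hndef]; exact_mod_cast Finset.card_filter_le _ _
    have h2 : ((G.filter (fun y => y ∉ S ∧ y ≤ f)).card : ℤ) ≤ n := by
      rw [hndef]; exact_mod_cast Finset.card_filter_le _ _
    linarith
  have hw2 : ∀ e f, e ∈ M.E → f ∈ M.E → e ∈ S → f ∈ S → e < f → w e < w f := by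
    intro e f heE hfE heS hfS hef
    rw [wpos e heS, wpos f hfS]
    have hsub : G.filter (fun y => y ∈ S ∧ y ≤ e) ⊆ G.filter (fun y => y ∈ S ∧ y ≤ f) := by
      intro y hy
      rw [Finset.mem_filter] at *
      exact ⟨hy.1, hy.2.1, hy.2.2.trans hef.le⟩
    have hmem : f ∈ G.filter (fun y => y ∈ S ∧ y ≤ f) :=
      Finset.mem_filter.2 ⟨(hG f).2 hfE, hfS, le_refl f⟩
    have hnot : f ∉ G.filter (fun y => y ∈ S ∧ y ≤ e) := by
      intro h
      exact absurd (Finset.mem_filter.1 h).2.2 (not_le.2 hef)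
    have hlt : (G.filter (fun y => y ∈ S ∧ y ≤ e)).card
        < (G.filter (fun y => y ∈ S ∧ y ≤ f)).card :=
      Finset.card_lt_card ((Finset.ssubset_iff_of_subset hsub).2 ⟨f, hmem, hnot⟩)
    exact_mod_cast hlt
  have hw3 : ∀ e f, e ∈ M.E → f ∈ M.E → e ∉ S → f ∉ S → e < f → w f < w e := by
    intro e f heE hfE heS hfS hef
    rw [wneg e heS, wneg f hfS]
    have hsub : G.filter (fun y => y ∉ S ∧ y ≤ e) ⊆ G.filter (fun y => y ∉ S ∧ y ≤ f) := by
      intro y hy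
      rw [Finset.mem_filter] at *
      exact ⟨hy.1, hy.2.1, hy.2.2.trans hef.le⟩
    have hmem : f ∈ G.filter (fun y => y ∉ S ∧ y ≤ f) :=
      Finset.mem_filter.2 ⟨(hG f).2 hfE, hfS, le_refl f⟩
    have hnot : f ∉ G.filter (fun y => y ∉ S ∧ y ≤ e) := by
      intro h
      exact absurd (Finset.mem_filter.1 h).2.2 (not_le.2 hef)
    have hlt : (G.filter (fun y => y ∉ S ∧ y ≤ e)).card
        < (G.filter (fun y => y ∉ S ∧ y ≤ f)).card :=
      Finset.card_lt_card ((Finset.ssubset_iff_of_subset hsub).2 ⟨f, hmem, hnot⟩)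
    have hlt' : ((G.filter (fun y => y ∉ S ∧ y ≤ e)).card : ℤ)
        < ((G.filter (fun y => y ∉ S ∧ y ≤ f)).card : ℤ) := by exact_mod_cast hlt
    linarith
  have hBfin : {B | M.IsBase B}.Finite :=
    M.ground_finite.finite_subsets.subset (fun B hB => hB.subset_ground)
  obtain ⟨B, hB, hmin⟩ := Set.exists_min_image _ (wt G w) hBfin M.exists_isBase
  refine ⟨B, hB, ?_, ?_⟩
  · intro x hxS hxB
    exact min_wt_exA hG hB (fun B' hB' => hmin B' hB') hw1 hw2 hxS (hS hxS) hxB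
  · intro x hxB hxS
    have hxE : x ∈ M.E := hB.subset_ground hxB
    have hmin' : ∀ B', M✶.IsBase B' →
        wt G (fun y => -(w y)) (M.E \ B) ≤ wt G (fun y => -(w y)) B' := by
      intro B' hB'
      have hB'E : B' ⊆ M.E := hB'.subset_ground
      have hcompl : M.IsBase (M.E \ B') := hB'.compl_isBase_of_dual
      have e1 := wt_compl w hG hB.subset_ground
      have e2 := wt_compl w hG (Set.diff_subset : M.E \ B' ⊆ M.E)
      rw [Set.diff_diff_cancel_left hB'E] at e2
      have hm := hmin _ hcompl
      linarith
    have hres := min_wt_exA (M := M✶) (S := M.E \ S) (B := M.E \ B) (G := G)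
      (w := fun y => -(w y)) hG hB.compl_isBase_dual hmin'
      (fun e f heE hfE heS hfS => by
        have hfS' : f ∈ S := by
          by_contra h
          exact hfS ⟨hfE, h⟩
        have h1 := hw1 f e hfE heE hfS' heS.2
        show -(w e) < -(w f)
        linarith)
      (fun e f heE hfE heS hfS hef => by
        have h1 := hw3 e f heE hfE heS.2 hfS.2 hef
        show -(w e) < -(w f)
        linarith)
      (⟨hxE, hxS⟩ : x ∈ M.E \ S) hxE (fun h => h.2 hxB)
    exact ⟨hxB, hres⟩

/-- Uniqueness auxiliary: a maximal element of the symmetric difference yields a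
contradiction. -/
lemma unique_aux [LinearOrder α] {M : Matroid α} [M.Finite] {S B B' : Set α} {a : α}
    (hB : M.IsBase B) (hB' : M.IsBase B')
    (h1 : ∀ x, x ∈ S → x ∉ B → x ∈ M.exA B)
    (h2 : ∀ x, x ∈ B → x ∉ S → x ∈ M.inA B)
    (h1' : ∀ x, x ∈ S → x ∉ B' → x ∈ M.exA B')
    (h2' : ∀ x, x ∈ B' → x ∉ S → x ∈ M.inA B')
    (haB : a ∈ B) (haB' : a ∉ B')
    (hmax : ∀ x ∈ (B \ B') ∪ (B' \ B), x ≤ a) : False := by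
  have haE : a ∈ M.E := hB.subset_ground haB
  have hdualB : M✶.IsBase (M.E \ B) := hB.compl_isBase_dual
  have hdualB' : M✶.IsBase (M.E \ B') := hB'.compl_isBase_dual
  have main : ∃ C D, M.Cct C ∧ C ⊆ insert a B' ∧ a ∈ C ∧
      M✶.Cct D ∧ D ⊆ insert a (M.E \ B) ∧ a ∈ D ∧ (∀ x ∈ C ∩ D, x ≤ a) := by
    by_cases haS : a ∈ S
    · obtain ⟨-, C, hC, hCs, hCm⟩ := h1' a haS haB'
      have haC : a ∈ C := mem_of_cct_insert hC hCs hB'.indep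
      obtain ⟨D, hD, hDs, haD⟩ :=
        fund_cct (M := M✶) hdualB haE (fun h => h.2 haB)
      exact ⟨C, D, hC, hCs, haC, hD, hDs, haD, fun x hx => hCm x hx.1⟩
    · obtain ⟨-, D, hD, hDs, hDm⟩ := (h2 a haB haS).2
      have haD : a ∈ D := mem_of_cct_insert hD hDs hdualB.indep
      obtain ⟨C, hC, hCs, haC⟩ := fund_cct hB' haE haB'
      exact ⟨C, D, hC, hCs, haC, hD, hDs, haD, fun x hx => hDm x hx.2⟩
  obtain ⟨C, D, hC, hCs, haC, hD, hDs, haD, hbound⟩ := main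
  have hnot : ¬ (C ∩ D ⊆ {a}) := fun h => cct_cocct hC hD haC haD h
  obtain ⟨c, hcCD, hca⟩ := Set.not_subset.1 hnot
  have hcne : c ≠ a := hca
  have hcB' : c ∈ B' := (hCs hcCD.1).resolve_left hcne
  have hcB : c ∉ B := fun h => ((hDs hcCD.2).resolve_left hcne).2 h
  have hclt : c < a := lt_of_le_of_ne (hbound c hcCD) hcne
  by_cases hcS : c ∈ S
  · obtain ⟨-, C', hC', hC's, hC'm⟩ := h1 c hcS hcB
    have hcC' : c ∈ C' := mem_of_cct_insert hC' hC's hB.indep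
    refine cct_cocct hC' hD hcC' hcCD.2 ?_
    rintro x ⟨hxC', hxD⟩
    rcases Set.mem_insert_iff.1 (hC's hxC') with rfl | hxB
    · exact rfl
    · rcases Set.mem_insert_iff.1 (hDs hxD) with rfl | hxnB
      · exact absurd (hC'm x hxC') (not_le.2 hclt)
      · exact absurd hxB hxnB.2
  · obtain ⟨-, D', hD', hD's, hD'm⟩ := (h2' c hcB' hcS).2
    have hcD' : c ∈ D' := mem_of_cct_insert hD' hD's hdualB'.indep
    refine cct_cocct hC hD' hcCD.1 hcD' ?_
    rintro x ⟨hxC, hxD'⟩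
    have hxa : x ≠ a := fun h => absurd (hD'm x hxD') (not_le.2 (h ▸ hclt))
    have hxB' : x ∈ B' := (hCs hxC).resolve_left hxa
    rcases Set.mem_insert_iff.1 (hD's hxD') with rfl | hxnB'
    · exact rfl
    · exact absurd hxB' hxnB'.2

/-- Uniqueness of the basis. -/
lemma base_unique [LinearOrder α] {M : Matroid α} [M.Finite] {S B B' : Set α}
    (hB : M.IsBase B) (hB' : M.IsBase B')
    (h1 : ∀ x, x ∈ S → x ∉ B → x ∈ M.exA B)
    (h2 : ∀ x, x ∈ B → x ∉ S → x ∈ M.inA B)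
    (h1' : ∀ x, x ∈ S → x ∉ B' → x ∈ M.exA B')
    (h2' : ∀ x, x ∈ B' → x ∉ S → x ∈ M.inA B') : B = B' := by
  by_contra hne
  have hfin : ((B \ B') ∪ (B' \ B)).Finite :=
    ((M.ground_finite.subset hB.subset_ground).diff (t := B')).union
      ((M.ground_finite.subset hB'.subset_ground).diff (t := B))
  have hne' : ((B \ B') ∪ (B' \ B)).Nonempty := by
    rcases Set.eq_empty_or_nonempty ((B \ B') ∪ (B' \ B)) with h | h
    · rw [Set.union_empty_iff] at h
      exact absurd (Set.Subset.antisymm (Set.diff_eq_empty.1 h.1)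
        (Set.diff_eq_empty.1 h.2)) hne
    · exact h
  obtain ⟨a, haT, hmaxf⟩ := Set.exists_max_image _ id hfin hne'
  have hmax : ∀ x ∈ (B \ B') ∪ (B' \ B), x ≤ a := fun x hx => hmaxf x hx
  rcases haT with ha | ha
  · exact unique_aux hB hB' h1 h2 h1' h2' ha.1 ha.2 hmax
  · exact unique_aux hB' hB h1' h2' h1 h2 ha.1 ha.2
      (fun x hx => hmax x (Set.union_comm (B' \ B) (B \ B') ▸ hx))

end CrapoAux

open CrapoAux in
/-- Crapo's decomposition: every subset of the ground set is uniquely of the form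
`(B \ Y) ∪ X` with `B` a basis, `X ⊆ EA(B)`, `Y ⊆ IA(B)`. -/
theorem crapo_decomposition [LinearOrder α] (M : Matroid α) [M.Finite]
    (S : Set α) (hS : S ⊆ M.E) :
    ∃! p : Set α × Set α × Set α,
      M.IsBase p.1 ∧ p.2.1 ⊆ M.exA p.1 ∧ p.2.2 ⊆ M.inA p.1 ∧
        S = (p.1 \ p.2.2) ∪ p.2.1 := by
  obtain ⟨B, hB, hex, hin⟩ := exists_good_base M S hS
  -- basic facts for an arbitrary valid triple
  have key : ∀ B₀ X₀ Y₀, M.IsBase B₀ → X₀ ⊆ M.exA B₀ → Y₀ ⊆ M.inA B₀ →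
      S = (B₀ \ Y₀) ∪ X₀ →
      (∀ x, x ∈ S → x ∉ B₀ → x ∈ M.exA B₀) ∧ (∀ x, x ∈ B₀ → x ∉ S → x ∈ M.inA B₀) ∧
        X₀ = S \ B₀ ∧ Y₀ = B₀ \ S := by
    intro B₀ X₀ Y₀ hB₀ hX₀ hY₀ hSeq
    have hXd : ∀ x ∈ X₀, x ∉ B₀ := fun x hx => (hX₀ hx).1.2
    have hYB : ∀ y ∈ Y₀, y ∈ B₀ := fun y hy => (hY₀ hy).1
    have hmemX : ∀ x, x ∈ S → x ∉ B₀ → x ∈ X₀ := by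
      intro x hxS hxB
      rw [hSeq] at hxS
      rcases hxS with h | h
      · exact absurd h.1 hxB
      · exact h
    have hmemY : ∀ x, x ∈ B₀ → x ∉ S → x ∈ Y₀ := by
      intro x hxB hxS
      by_contra h
      exact hxS (hSeq ▸ Or.inl ⟨hxB, h⟩)
    refine ⟨fun x hxS hxB => hX₀ (hmemX x hxS hxB),
      fun x hxB hxS => hY₀ (hmemY x hxB hxS), ?_, ?_⟩
    · apply Set.Subset.antisymm
      · intro x hx
        exact ⟨hSeq ▸ Or.inr hx, hXd x hx⟩
      · intro x hx
        exact hmemX x hx.1 hx.2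
    · apply Set.Subset.antisymm
      · intro y hy
        refine ⟨hYB y hy, fun hyS => ?_⟩
        rw [hSeq] at hyS
        rcases hyS with h | h
        · exact h.2 hy
        · exact hXd y h (hYB y hy)
      · intro x hx
        exact hmemY x hx.1 hx.2
  refine ⟨⟨B, S \ B, B \ S⟩, ⟨hB, ?_, ?_, ?_⟩, ?_⟩
  · exact fun x hx => hex x hx.1 hx.2
  · exact fun x hx => hin x hx.1 hx.2
  · ext x
    simp only [Set.mem_union, Set.mem_diff]
    constructor
    · intro hx
      by_cases hxB : x ∈ B
      · exact Or.inl ⟨hxB, fun h => h.2 hx⟩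
      · exact Or.inr ⟨hx, hxB⟩
    · rintro (⟨hxB, h⟩ | ⟨hxS, -⟩)
      · by_contra hxS
        exact h ⟨hxB, hxS⟩
      · exact hxS
  · rintro ⟨B', X', Y'⟩ ⟨hB', hX', hY', hS'⟩
    obtain ⟨h1', h2', hXeq, hYeq⟩ := key B' X' Y' hB' hX' hY' hS'
    have hBeq : B' = B :=
      base_unique hB' hB h1' h2' (fun x hxS hxB => hex x hxS hxB)
        (fun x hxB hxS => hin x hxB hxS)
    subst hBeq
    subst hXeq
    subst hYeq
    rfl
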